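/- Let n be a nonnegative integer and let a, b be odd positive integers. Then I_0({a,b}^n) = (-1)^n ({a+b}^n) in 𝓘, where {a,b}^n is the index (a,b,a,b,…,a,b) of length 2n and {a+b}^n is the index of n copies of a+b. -/

import Mathlib

/-- Indices: finite sequences of positive integers (modeled as lists of naturals). -/
abbrev Idx := List ℕ

/-- The ℚ-vector space 𝓘 on the set of indices. -/
abbrev Ical := Idx →₀ ℚ

/-- Auxiliary harmonic product on reversed lists (cons = append at the end). -/
noncomputable def harmAux : Idx → Idx → Ical
  | [], l => Finsupp.single l 1
  | a :: k, [] => Finsupp.single (a :: k) 1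
  | a :: k, b :: l =>
      Finsupp.mapDomain (a :: ·) (harmAux k (b :: l)) +
      Finsupp.mapDomain (b :: ·) (harmAux (a :: k) l) +
      Finsupp.mapDomain ((a + b) :: ·) (harmAux k l)
termination_by k l => k.length + l.length

/-- The harmonic (stuffle) product of two indices. -/
noncomputable def harm (k l : Idx) : Ical :=
  Finsupp.mapDomain List.reverse (harmAux k.reverse l.reverse)

/-- Bilinear extension of the harmonic product to 𝓘. -/
noncomputable def harmF (x y : Ical) : Ical :=
  x.sum fun k c => y.sum fun l d => (c * d) • harm k l

/-- The map σₙ on indices. -/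
noncomputable def sigma : ℕ → Idx → Ical
  | n, [] => if n = 0 then Finsupp.single [] 1 else 0
  | n, k :: ks =>
      ∑ a ∈ Finset.range (n + 1),
        ((k + a - 1).choose a : ℚ) •
          Finsupp.mapDomain (fun t => (k + a) :: t) (sigma (n - a) ks)

/-- Linear extension of σₙ to 𝓘. -/
noncomputable def sigmaL (n : ℕ) (x : Ical) : Ical :=
  x.sum fun k c => c • sigma n k

/-- The map ₘIₙ on indices. -/
noncomputable def mI (m n : ℕ) (ks : Idx) : Ical :=
  ∑ i ∈ Finset.range (ks.length + 1),
    ((-1 : ℚ)) ^ ((ks.drop i).sum) •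
      harmF (sigma m (ks.take i)) (sigma n ((ks.drop i).reverse))

/-- The index shuffle product ⧢̃ of two indices. -/
noncomputable def sh : Idx → Idx → Ical
  | [], l => Finsupp.single l 1
  | a :: k, [] => Finsupp.single (a :: k) 1
  | a :: k, b :: l =>
      Finsupp.mapDomain (a :: ·) (sh k (b :: l)) +
      Finsupp.mapDomain (b :: ·) (sh (a :: k) l)
termination_by k l => k.length + l.length

/-- The multiple zeta value of an index. -/
noncomputable def mzv (ks : List ℕ) : ℝ :=
  ∑' f : {f : Fin ks.length → ℕ // StrictMono f ∧ ∀ i, 0 < f i},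
    ∏ i, (1 / (f.1 i : ℝ) ^ ks.get i)

lemma harmAux_nil (l : Idx) : harmAux [] l = Finsupp.single l 1 := by rw [harmAux]
lemma harmAux_nil' (k : Idx) : harmAux k [] = Finsupp.single k 1 := by
  cases k <;> rw [harmAux]
lemma harmAux_cons (a b : ℕ) (k l : Idx) : harmAux (a :: k) (b :: l) =
      Finsupp.mapDomain (a :: ·) (harmAux k (b :: l)) +
      Finsupp.mapDomain (b :: ·) (harmAux (a :: k) l) +
      Finsupp.mapDomain ((a + b) :: ·) (harmAux k l) := by rw [harmAux]

/-- the word (a b)^n -/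
def abw (a b : ℕ) : ℕ → Idx
  | 0 => []
  | n+1 => a :: b :: abw a b n

lemma abw_succ_append (a b n : ℕ) : abw a b (n+1) = abw a b n ++ [a, b] := by
  induction n with
  | zero => rfl
  | succ n ih => show a :: b :: abw a b (n+1) = (a :: b :: abw a b n) ++ [a, b]
                 rw [ih]; simp

lemma reverse_abw (a b n : ℕ) : (abw a b n).reverse = abw b a n := by
  induction n with
  | zero => rfl
  | succ n ih =>
      show (a :: b :: abw a b n).reverse = abw b a (n+1)
      rw [abw_succ_append b a n, ← ih]; simp

lemma length_abw (a b n : ℕ) : (abw a b n).length = 2 * n := by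
  induction n with
  | zero => rfl
  | succ n ih => show (a :: b :: abw a b n).length = 2 * (n+1)
                 simp [ih]; omega

lemma sum_abw (a b n : ℕ) : (abw a b n).sum = n * (a + b) := by
  induction n with
  | zero => simp [abw]
  | succ n ih => show (a :: b :: abw a b n).sum = (n+1) * (a + b)
                 simp [ih]; ring

lemma join_replicate (a b n : ℕ) : (List.replicate n [a, b]).flatten = abw a b n := by
  induction n with
  | zero => rfl
  | succ n ih => rw [List.replicate_succ]
                 show ([a,b] :: List.replicate n [a,b]).flatten = _
                 rw [List.flatten_cons]
                 show [a,b] ++ (List.replicate n [a,b]).flatten = _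
                 rw [ih]; rfl

lemma abw_drop (a b : ℕ) : ∀ (j n : ℕ), (abw a b n).drop (2*j) = abw a b (n - j)
  | 0, n => by simp
  | j+1, 0 => by simp [abw]
  | j+1, n+1 => by
      have h2 : 2*(j+1) = (2*j)+1+1 := by ring
      show ((a :: b :: abw a b n).drop (2*(j+1))) = abw a b (n+1 - (j+1))
      rw [h2, List.drop_succ_cons, List.drop_succ_cons, abw_drop a b j n,
        Nat.succ_sub_succ]

lemma abw_take (a b : ℕ) : ∀ (j n : ℕ), j ≤ n → (abw a b n).take (2*j) = abw a b j
  | 0, n, _ => by simp [abw]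
  | j+1, 0, h => by omega
  | j+1, n+1, h => by
      have h2 : 2*(j+1) = (2*j)+1+1 := by ring
      show ((a :: b :: abw a b n).take (2*(j+1))) = abw a b (j+1)
      rw [h2, List.take_succ_cons, List.take_succ_cons, abw_take a b j n (by omega)]
      rfl

lemma abw_take_odd (a b : ℕ) : ∀ (j n : ℕ), j < n →
    (abw a b n).take (2*j+1) = abw a b j ++ [a]
  | 0, n+1, _ => by simp [abw]
  | j+1, 0, h => by omega
  | j+1, n+1, h => by
      have h2 : 2*(j+1)+1 = (2*j+1)+1+1 := by ring
      show ((a :: b :: abw a b n).take (2*(j+1)+1)) = abw a b (j+1) ++ [a]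
      rw [h2, List.take_succ_cons, List.take_succ_cons, abw_take_odd a b j n (by omega)]
      rfl

lemma abw_drop_odd (a b : ℕ) : ∀ (j n : ℕ), j < n →
    (abw a b n).drop (2*j+1) = b :: abw a b (n - 1 - j)
  | 0, n+1, _ => by simp [abw]
  | j+1, 0, h => by omega
  | j+1, n+1, h => by
      have h2 : 2*(j+1)+1 = (2*j+1)+1+1 := by ring
      show ((a :: b :: abw a b n).drop (2*(j+1)+1)) = b :: abw a b (n+1 - 1 - (j+1))
      rw [h2, List.drop_succ_cons, List.drop_succ_cons, abw_drop_odd a b j n (by omega)]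
      congr 2
      omega

noncomputable def PP (a b j m : ℕ) : Ical := harmAux (abw b a j) (abw a b m)
noncomputable def QQ (a b j m : ℕ) : Ical := harmAux (a :: abw b a j) (b :: abw a b m)
noncomputable def CC (a b j m : ℕ) : Ical := harmAux (a :: abw b a j) (abw a b m)
noncomputable def DD (a b j m : ℕ) : Ical := harmAux (abw b a j) (b :: abw a b m)

noncomputable def ZZ (a b n : ℕ) : Ical :=
  (∑ j ∈ Finset.range (n+1), PP a b j (n-j)) - ∑ j ∈ Finset.range n, QQ a b j (n-1-j)

lemma PP_succ (a b j m : ℕ) : PP a b (j+1) (m+1) =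
    Finsupp.mapDomain (b :: ·) (CC a b j (m+1)) +
    Finsupp.mapDomain (a :: ·) (DD a b (j+1) m) +
    Finsupp.mapDomain ((a+b) :: ·) (QQ a b j m) := by
  have : abw b a (j+1) = b :: a :: abw b a j := rfl
  have h2 : abw a b (m+1) = a :: b :: abw a b m := rfl
  rw [PP, this, h2, harmAux_cons, Nat.add_comm b a]
  rfl

lemma QQ_eq (a b j m : ℕ) : QQ a b j m =
    Finsupp.mapDomain (a :: ·) (DD a b j m) +
    Finsupp.mapDomain (b :: ·) (CC a b j m) +
    Finsupp.mapDomain ((a+b) :: ·) (PP a b j m) := by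
  rw [QQ, harmAux_cons]; rfl

lemma ZZ_succ (a b n : ℕ) :
    ZZ a b (n+1) = - Finsupp.mapDomain ((a+b) :: ·) (ZZ a b n) := by
  have hmap : ∀ (x y : Ical), Finsupp.mapDomain (((a+b) :: ·) : Idx → Idx) (x - y)
      = Finsupp.mapDomain ((a+b) :: ·) x - Finsupp.mapDomain ((a+b) :: ·) y :=
    fun x y => map_sub (Finsupp.mapDomain.addMonoidHom _) x y
  have hmapsum : ∀ (m : ℕ) (g : ℕ → Ical),
      Finsupp.mapDomain (((a+b) :: ·) : Idx → Idx) (∑ j ∈ Finset.range m, g j)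
      = ∑ j ∈ Finset.range m, Finsupp.mapDomain ((a+b) :: ·) (g j) :=
    fun m g => map_sum (Finsupp.mapDomain.addMonoidHom _) g _
  have hmid : ∑ j ∈ Finset.range n, PP a b (j+1) (n-j)
      = (∑ j ∈ Finset.range n, Finsupp.mapDomain (b :: ·) (CC a b j (n-j)))
      + (∑ j ∈ Finset.range n, Finsupp.mapDomain (a :: ·) (DD a b (j+1) (n-1-j)))
      + (∑ j ∈ Finset.range n, Finsupp.mapDomain ((a+b) :: ·) (QQ a b j (n-1-j))) := by
    rw [← Finset.sum_add_distrib, ← Finset.sum_add_distrib]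
    refine Finset.sum_congr rfl fun j hj => ?_
    have hj' := Finset.mem_range.mp hj
    rw [show n - j = (n-1-j)+1 from by omega, PP_succ]
  have hY : ∑ j ∈ Finset.range (n+1), QQ a b j (n-j)
      = (∑ j ∈ Finset.range (n+1), Finsupp.mapDomain (a :: ·) (DD a b j (n-j)))
      + (∑ j ∈ Finset.range (n+1), Finsupp.mapDomain (b :: ·) (CC a b j (n-j)))
      + (∑ j ∈ Finset.range (n+1), Finsupp.mapDomain ((a+b) :: ·) (PP a b j (n-j))) := by
    rw [← Finset.sum_add_distrib, ← Finset.sum_add_distrib]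
    exact Finset.sum_congr rfl fun j hj => QQ_eq a b j (n-j)
  have hD : ∑ j ∈ Finset.range (n+1), Finsupp.mapDomain (a :: ·) (DD a b j (n-j))
      = (∑ j ∈ Finset.range n, Finsupp.mapDomain (a :: ·) (DD a b (j+1) (n-1-j)))
      + Finsupp.mapDomain (a :: ·) (DD a b 0 n) := by
    rw [Finset.sum_range_succ']
    congr 1
    refine Finset.sum_congr rfl fun j hj => ?_
    congr 2
    omega
  have hC : ∑ j ∈ Finset.range (n+1), Finsupp.mapDomain (b :: ·) (CC a b j (n-j))
      = (∑ j ∈ Finset.range n, Finsupp.mapDomain (b :: ·) (CC a b j (n-j)))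
      + Finsupp.mapDomain (b :: ·) (CC a b n 0) := by
    rw [Finset.sum_range_succ, Nat.sub_self]
  have b1 : PP a b 0 (n+1) = Finsupp.mapDomain (a :: ·) (DD a b 0 n) := by
    show harmAux [] (abw a b (n+1)) =
      Finsupp.mapDomain (a :: ·) (harmAux [] (b :: abw a b n))
    rw [harmAux_nil, harmAux_nil, Finsupp.mapDomain_single]
    rfl
  have b2 : PP a b (n+1) 0 = Finsupp.mapDomain (b :: ·) (CC a b n 0) := by
    show harmAux (abw b a (n+1)) [] =
      Finsupp.mapDomain (b :: ·) (harmAux (a :: abw b a n) [])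
    rw [harmAux_nil', harmAux_nil', Finsupp.mapDomain_single]
    rfl
  have hX : ∑ j ∈ Finset.range (n+1+1), PP a b j (n+1-j)
      = ((∑ j ∈ Finset.range n, PP a b (j+1) (n-j)) + PP a b (n+1) 0)
        + PP a b 0 (n+1) := by
    rw [Finset.sum_range_succ']
    congr 1
    rw [Finset.sum_range_succ]
    congr 1
    · refine Finset.sum_congr rfl fun j hj => ?_
      congr 1
      omega
    · show PP a b (n+1) (n+1-(n+1)) = PP a b (n+1) 0
      rw [Nat.sub_self]
  unfold ZZ
  rw [hmap, hmapsum, hmapsum, hX]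
  have hQidx : ∑ j ∈ Finset.range (n+1), QQ a b (j) (n+1-1-j)
      = ∑ j ∈ Finset.range (n+1), QQ a b j (n-j) := rfl
  rw [hQidx, hY, hD, hC, b1, b2, hmid]
  abel

lemma ZZ_closed (a b n : ℕ) :
    ZZ a b n = (-1:ℚ)^n • Finsupp.single (List.replicate n (a+b)) 1 := by
  induction n with
  | zero =>
      show (∑ j ∈ Finset.range 1, PP a b j (0-j)) - ∑ j ∈ Finset.range 0, QQ a b j (0-1-j) = _
      rw [Finset.sum_range_one, Finset.sum_range_zero]
      show harmAux [] [] - 0 = _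
      rw [harmAux_nil]
      simp
  | succ n ih =>
      rw [ZZ_succ, ih, Finsupp.mapDomain_smul, Finsupp.mapDomain_single,
        List.replicate_succ, pow_succ]
      simp [neg_smul, mul_smul, smul_smul]


lemma sigma_zero (k : Idx) : sigma 0 k = Finsupp.single k 1 := by
  induction k with
  | nil => rw [sigma]; simp
  | cons x ks ih =>
      rw [sigma, Finset.sum_range_one]
      simp [ih, Finsupp.mapDomain_single]

lemma harmF_single (k l : Idx) :
    harmF (Finsupp.single k (1:ℚ)) (Finsupp.single l 1) = harm k l := by
  unfold harmF
  rw [Finsupp.sum_single_index (by simp), Finsupp.sum_single_index (by simp)]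
  simp

lemma sum_split (f : ℕ → Ical) (n : ℕ) :
    ∑ i ∈ Finset.range (2*n+1), f i
      = (∑ j ∈ Finset.range (n+1), f (2*j)) + ∑ j ∈ Finset.range n, f (2*j+1) := by
  induction n with
  | zero => simp
  | succ n ih =>
      have h : 2*(n+1)+1 = (2*n+1)+1+1 := by ring
      rw [h, Finset.sum_range_succ, Finset.sum_range_succ, ih,
        Finset.sum_range_succ (fun j => f (2*j)) (n+1),
        Finset.sum_range_succ (fun j => f (2*j+1)) n]
      have h1 : f (2*n+1+1) = f (2*(n+1)) := rfl
      rw [h1]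
      abel

lemma key (a b n : ℕ) (ha : Odd a) (hb : Odd b) :
    mI 0 0 (abw a b n) = Finsupp.mapDomain List.reverse (ZZ a b n) := by
  have hab : Even (a + b) := ha.add_odd hb
  have hterm : ∀ i, ((-1:ℚ))^(((abw a b n).drop i).sum) •
      harmF (sigma 0 ((abw a b n).take i)) (sigma 0 (((abw a b n).drop i).reverse))
      = ((-1:ℚ))^(((abw a b n).drop i).sum) • Finsupp.mapDomain List.reverse
          (harmAux ((abw a b n).take i).reverse ((abw a b n).drop i)) := by
    intro i
    rw [sigma_zero, sigma_zero, harmF_single, harm, List.reverse_reverse]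
  unfold mI
  rw [length_abw]
  rw [Finset.sum_congr rfl (fun i _ => hterm i)]
  rw [sum_split]
  have heven : ∀ j ∈ Finset.range (n+1),
      ((-1:ℚ))^(((abw a b n).drop (2*j)).sum) • Finsupp.mapDomain List.reverse
          (harmAux ((abw a b n).take (2*j)).reverse ((abw a b n).drop (2*j)))
      = Finsupp.mapDomain List.reverse (PP a b j (n-j)) := by
    intro j hj
    have hj' : j ≤ n := by have := Finset.mem_range.mp hj; omega
    rw [abw_take a b j n hj', abw_drop, reverse_abw, sum_abw]
    rw [Even.neg_one_pow (hab.mul_left _), one_smul]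
    rfl
  have hodd : ∀ j ∈ Finset.range n,
      ((-1:ℚ))^(((abw a b n).drop (2*j+1)).sum) • Finsupp.mapDomain List.reverse
          (harmAux ((abw a b n).take (2*j+1)).reverse ((abw a b n).drop (2*j+1)))
      = - Finsupp.mapDomain List.reverse (QQ a b j (n-1-j)) := by
    intro j hj
    have hj' : j < n := Finset.mem_range.mp hj
    rw [abw_take_odd a b j n hj', abw_drop_odd a b j n hj']
    rw [List.reverse_append, reverse_abw, List.sum_cons, sum_abw]
    rw [Odd.neg_one_pow (hb.add_even (hab.mul_left _)), neg_one_smul]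
    rfl
  rw [Finset.sum_congr rfl heven, Finset.sum_congr rfl hodd]
  rw [ZZ]
  have hms : ∀ x y : Ical, Finsupp.mapDomain (List.reverse : Idx → Idx) (x - y)
      = Finsupp.mapDomain List.reverse x - Finsupp.mapDomain List.reverse y :=
    fun x y => map_sub (Finsupp.mapDomain.addMonoidHom _) x y
  have hsum : ∀ (m : ℕ) (g : ℕ → Ical),
      Finsupp.mapDomain (List.reverse : Idx → Idx) (∑ j ∈ Finset.range m, g j)
      = ∑ j ∈ Finset.range m, Finsupp.mapDomain List.reverse (g j) :=
    fun m g => map_sum (Finsupp.mapDomain.addMonoidHom _) g _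
  rw [hms, hsum, hsum, Finset.sum_neg_distrib]
  abel


/-- For odd positive a, b: I₀({a,b}ⁿ) = (-1)ⁿ ({a+b}ⁿ). -/
theorem I0_alternating (n a b : ℕ) (ha : Odd a) (hb : Odd b)
    (ha' : 0 < a) (hb' : 0 < b) :
    mI 0 0 ((List.replicate n [a, b]).flatten)
      = ((-1 : ℚ)) ^ n • Finsupp.single (List.replicate n (a + b)) (1 : ℚ) := by

  rw [join_replicate, key a b n ha hb, ZZ_closed, Finsupp.mapDomain_smul,
    Finsupp.mapDomain_single, List.reverse_replicate]
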